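/- Let G be a pair of d-dimensional layer-permuted butterflies with left layer permutation π and right layer permutation σ; fix q ≤ d and m = d − q, with q ≥ 1. Suppose (no reused dimensions) π(m+1) ∉ {σ(q), σ(q+1), …, σ(d)} and σ(q) ∉ {π(1), …, π(m+1)}. Then for every connected component C of the q-dimensional sub-butterfly connectivity graph, the set of children of the vertices of C (each left vertex x* has children x0* and x1*, fixing bit π(m+1); each right vertex *y has children *0y and *1y, fixing bit σ(q)) forms a single connected component of the (q−1)-dimensional sub-butterfly connectivity graph, and this component is a complete bipartite graph with twice as many vertices on each side as C. -/

import Mathlib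

/-- A binary string of length `d`. -/
abbrev BStr (d : ℕ) := Fin d → Bool

/-- The string `b` lies in the left sub-butterfly `x*` of a pair of
`d`-dimensional layer-permuted butterflies with left layer permutation `π`
(written `0`-based): bit `π i` of `b` equals `x i` for all `i < m = d - q`. -/
def leftSubMem (d q : ℕ) (π : Equiv.Perm (Fin d))
    (x : Fin (d - q) → Bool) (b : BStr d) : Prop :=
  ∀ i : Fin (d - q), b (π (Fin.castLE (Nat.sub_le d q) i)) = x i

/-- The string `b` lies in the right sub-butterfly `*y` of a pair of
`d`-dimensional layer-permuted butterflies with right layer permutation `σ`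
(written `0`-based): bit `σ (q + j)` of `b` equals `y j` for all
`j < m = d - q`. -/
def rightSubMem (d q : ℕ) (hq : q ≤ d) (σ : Equiv.Perm (Fin d))
    (y : Fin (d - q) → Bool) (b : BStr d) : Prop :=
  ∀ j : Fin (d - q), b (σ (Fin.castLE (by omega) (Fin.natAdd q j))) = y j

/-- The left sub-butterfly `x*` and the right sub-butterfly `*y` share at least
one node on layer `d`. -/
def connRel (d q : ℕ) (hq : q ≤ d) (π σ : Equiv.Perm (Fin d))
    (x y : Fin (d - q) → Bool) : Prop :=
  ∃ b : BStr d, leftSubMem d q π x b ∧ rightSubMem d q hq σ y b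

/-- The `q`-dimensional sub-butterfly connectivity graph of a pair of
`d`-dimensional layer-permuted butterflies: a bipartite graph whose left
vertices (`Sum.inl`) are the `2^m` left sub-butterflies `x*` and whose right
vertices (`Sum.inr`) are the `2^m` right sub-butterflies `*y`, adjacent iff
the two sub-butterflies share a node on layer `d`. -/
def connGraph (d q : ℕ) (hq : q ≤ d) (π σ : Equiv.Perm (Fin d)) :
    SimpleGraph ((Fin (d - q) → Bool) ⊕ (Fin (d - q) → Bool)) where
  Adj u v :=
    (∃ x y, u = Sum.inl x ∧ v = Sum.inr y ∧ connRel d q hq π σ x y) ∨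
    (∃ x y, u = Sum.inr y ∧ v = Sum.inl x ∧ connRel d q hq π σ x y)
  symm := by
    constructor
    rintro u v (⟨x, y, rfl, rfl, h⟩ | ⟨x, y, rfl, rfl, h⟩)
    · exact Or.inr ⟨x, y, rfl, rfl, h⟩
    · exact Or.inl ⟨x, y, rfl, rfl, h⟩
  loopless := by
    constructor
    rintro u (⟨x, y, h1, h2, -⟩ | ⟨x, y, h1, h2, -⟩) <;> subst h1 <;> simp at h2

/-- The child `x0*` or `x1*` (according to `t`) of the left sub-butterfly `x*`:
the `(q-1)`-dimensional left sub-butterfly obtained by additionally fixing bit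
`π (m+1)` (`0`-based: `π m`, `m = d - q`) to the value `t`. -/
def childL (d q : ℕ) (x : Fin (d - q) → Bool) (t : Bool) :
    Fin (d - (q - 1)) → Bool :=
  fun i => if h : (i : ℕ) < d - q then x ⟨i, h⟩ else t

/-- The child `*0y` or `*1y` (according to `t`) of the right sub-butterfly
`*y`: the `(q-1)`-dimensional right sub-butterfly obtained by additionally
fixing bit `σ q` (`0`-based: `σ (q-1)`) to the value `t`. -/
def childR (d q : ℕ) (y : Fin (d - q) → Bool) (t : Bool) :
    Fin (d - (q - 1)) → Bool :=
  fun j => if h : 0 < (j : ℕ) then y ⟨(j : ℕ) - 1, by have := j.isLt; omega⟩ else t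

/-- The child (according to `t`) of a vertex of the `q`-dimensional
sub-butterfly connectivity graph, as a vertex of the `(q-1)`-dimensional one. -/
def childV (d q : ℕ) :
    ((Fin (d - q) → Bool) ⊕ (Fin (d - q) → Bool)) → Bool →
      ((Fin (d - (q - 1)) → Bool) ⊕ (Fin (d - (q - 1)) → Bool))
  | Sum.inl x, t => Sum.inl (childL d q x t)
  | Sum.inr y, t => Sum.inr (childR d q y t)


section Aux

variable {d n : ℕ}

lemma fin_perm_congr (π : Equiv.Perm (Fin d)) {a b : Fin d} (h : (a : ℕ) = (b : ℕ)) :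
    π a = π b := congrArg π (Fin.ext h)

lemma left_idx_inj (hn : n ≤ d) (π : Equiv.Perm (Fin d)) {i i' : Fin (d - n)}
    (h : π (Fin.castLE (Nat.sub_le d n) i) = π (Fin.castLE (Nat.sub_le d n) i')) : i = i' := by
  have h2 := congrArg Fin.val (π.injective h)
  simp only [Fin.coe_castLE] at h2
  exact Fin.ext h2

lemma right_idx_inj (hn : n ≤ d) (σ : Equiv.Perm (Fin d)) {j j' : Fin (d - n)}
    (h : σ (Fin.castLE (by omega : n + (d - n) ≤ d) (Fin.natAdd n j))
       = σ (Fin.castLE (by omega : n + (d - n) ≤ d) (Fin.natAdd n j'))) : j = j' := by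
  have h2 := congrArg Fin.val (σ.injective h)
  simp only [Fin.coe_castLE, Fin.coe_natAdd] at h2
  exact Fin.ext (by omega)

/-- pointwise characterization of `connRel`. -/
lemma connRel_iff (hn : n ≤ d) (π σ : Equiv.Perm (Fin d)) (x y : Fin (d - n) → Bool) :
    connRel d n hn π σ x y ↔
      ∀ i j : Fin (d - n),
        π (Fin.castLE (Nat.sub_le d n) i) = σ (Fin.castLE (by omega) (Fin.natAdd n j)) →
        x i = y j := by
  classical
  constructor
  · rintro ⟨b, hl, hr⟩ i j hij
    rw [← hl i, ← hr j]
    exact congrArg b hij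
  · intro h
    refine ⟨fun p =>
      if hp : ∃ i : Fin (d - n), π (Fin.castLE (Nat.sub_le d n) i) = p then x hp.choose
      else if hp' : ∃ j : Fin (d - n),
          σ (Fin.castLE (by omega : n + (d - n) ≤ d) (Fin.natAdd n j)) = p then y hp'.choose
      else false, ?_, ?_⟩
    · intro i
      have hp : ∃ i' : Fin (d - n), π (Fin.castLE (Nat.sub_le d n) i')
          = π (Fin.castLE (Nat.sub_le d n) i) := ⟨i, rfl⟩
      beta_reduce
      rw [dif_pos hp]
      rw [left_idx_inj hn π hp.choose_spec]
    · intro j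
      by_cases hp : ∃ i : Fin (d - n), π (Fin.castLE (Nat.sub_le d n) i)
          = σ (Fin.castLE (by omega : n + (d - n) ≤ d) (Fin.natAdd n j))
      · beta_reduce
        rw [dif_pos hp]
        exact h hp.choose j hp.choose_spec
      · beta_reduce
        rw [dif_neg hp]
        have hp' : ∃ j' : Fin (d - n), σ (Fin.castLE (by omega : n + (d - n) ≤ d)
            (Fin.natAdd n j')) = σ (Fin.castLE (by omega : n + (d - n) ≤ d) (Fin.natAdd n j)) :=
          ⟨j, rfl⟩
        rw [dif_pos hp']
        rw [right_idx_inj hn σ hp'.choose_spec]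

/-- every left vertex has a neighbour -/
lemma exists_nbrR (hn : n ≤ d) (π σ : Equiv.Perm (Fin d)) (x : Fin (d - n) → Bool) :
    ∃ y, connRel d n hn π σ x y := by
  classical
  refine ⟨fun j => if hp : ∃ i : Fin (d - n), π (Fin.castLE (Nat.sub_le d n) i)
      = σ (Fin.castLE (by omega : n + (d - n) ≤ d) (Fin.natAdd n j)) then x hp.choose else false,
    (connRel_iff hn π σ x _).mpr ?_⟩
  intro i j hij
  have hp : ∃ i' : Fin (d - n), π (Fin.castLE (Nat.sub_le d n) i')
      = σ (Fin.castLE (by omega : n + (d - n) ≤ d) (Fin.natAdd n j)) := ⟨i, hij⟩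
  rw [dif_pos hp]
  rw [left_idx_inj hn π (hp.choose_spec.trans hij.symm)]

lemma exists_nbrL (hn : n ≤ d) (π σ : Equiv.Perm (Fin d)) (y : Fin (d - n) → Bool) :
    ∃ x, connRel d n hn π σ x y := by
  classical
  refine ⟨fun i => if hp : ∃ j : Fin (d - n), σ (Fin.castLE (by omega : n + (d - n) ≤ d)
      (Fin.natAdd n j)) = π (Fin.castLE (Nat.sub_le d n) i) then y hp.choose else false,
    (connRel_iff hn π σ _ y).mpr ?_⟩
  intro i j hij
  have hp : ∃ j' : Fin (d - n), σ (Fin.castLE (by omega : n + (d - n) ≤ d)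
      (Fin.natAdd n j')) = π (Fin.castLE (Nat.sub_le d n) i) := ⟨j, hij.symm⟩
  rw [dif_pos hp]
  rw [right_idx_inj hn σ (hp.choose_spec.trans hij)]

/-- rectangularity of `connRel` -/
lemma connRel_rect (hn : n ≤ d) (π σ : Equiv.Perm (Fin d)) {x x' y y' : Fin (d - n) → Bool}
    (h1 : connRel d n hn π σ x y) (h2 : connRel d n hn π σ x' y)
    (h3 : connRel d n hn π σ x' y') : connRel d n hn π σ x y' := by
  rw [connRel_iff] at *
  intro i j hij
  rw [h1 i j hij, ← h2 i j hij, h3 i j hij]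

lemma adj_inl_inr (hn : n ≤ d) (π σ : Equiv.Perm (Fin d)) (x y : Fin (d - n) → Bool) :
    (connGraph d n hn π σ).Adj (Sum.inl x) (Sum.inr y) ↔ connRel d n hn π σ x y := by
  constructor
  · rintro (⟨x', y', hx, hy, h⟩ | ⟨x', y', hx, hy, h⟩)
    · cases Sum.inl.inj hx; cases Sum.inr.inj hy; exact h
    · cases hx
  · intro h
    exact Or.inl ⟨x, y, rfl, rfl, h⟩

/-- the bipartite invariant along walks -/
def sideInv (hn : n ≤ d) (π σ : Equiv.Perm (Fin d)) :
    ((Fin (d - n) → Bool) ⊕ (Fin (d - n) → Bool)) →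
    ((Fin (d - n) → Bool) ⊕ (Fin (d - n) → Bool)) → Prop
  | Sum.inl x, Sum.inr y => connRel d n hn π σ x y
  | Sum.inr y, Sum.inl x => connRel d n hn π σ x y
  | Sum.inl x, Sum.inl x' => ∀ y, connRel d n hn π σ x y ↔ connRel d n hn π σ x' y
  | Sum.inr y, Sum.inr y' => ∀ x, connRel d n hn π σ x y ↔ connRel d n hn π σ x y'

lemma sideInv_refl (hn : n ≤ d) (π σ : Equiv.Perm (Fin d)) (u) : sideInv hn π σ u u := by
  cases u <;> exact fun _ => Iff.rfl

lemma sideInv_of_adj (hn : n ≤ d) (π σ : Equiv.Perm (Fin d)) {u v}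
    (h : (connGraph d n hn π σ).Adj u v) : sideInv hn π σ u v := by
  rcases h with ⟨x, y, rfl, rfl, h⟩ | ⟨x, y, rfl, rfl, h⟩ <;> exact h

lemma sideInv_trans (hn : n ≤ d) (π σ : Equiv.Perm (Fin d)) {u v w}
    (h1 : sideInv hn π σ u v) (h2 : sideInv hn π σ v w) : sideInv hn π σ u w := by
  rcases u with x | y <;> rcases v with x1 | y1 <;> rcases w with x2 | y2 <;>
    simp only [sideInv] at *
  · exact fun y => (h1 y).trans (h2 y)
  · exact (h1 y2).mpr h2
  · intro y
    constructor
    · intro h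
      exact connRel_rect hn π σ h2 h1 h
    · intro h
      exact connRel_rect hn π σ h1 h2 h
  · exact (h2 x).mp h1
  · exact (h2 y).mp h1
  · intro x0
    constructor
    · intro h
      exact connRel_rect hn π σ h h1 h2
    · intro h
      exact connRel_rect hn π σ h h2 h1
  · exact (h1 x2).mpr h2
  · exact fun x0 => (h1 x0).trans (h2 x0)

end Aux

section Aux2

variable {d n : ℕ}

lemma sideInv_of_reachable (hn : n ≤ d) (π σ : Equiv.Perm (Fin d)) {u v}
    (h : (connGraph d n hn π σ).Reachable u v) : sideInv hn π σ u v := by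
  obtain ⟨p⟩ := h
  induction p with
  | nil => exact sideInv_refl hn π σ _
  | cons ha p ih => exact sideInv_trans hn π σ (sideInv_of_adj hn π σ ha) ih

lemma reachable_connRel (hn : n ≤ d) (π σ : Equiv.Perm (Fin d)) {x y}
    (h : (connGraph d n hn π σ).Reachable (Sum.inl x) (Sum.inr y)) :
    connRel d n hn π σ x y :=
  sideInv_of_reachable hn π σ h

end Aux2

section Child

variable {d q : ℕ}

lemma childL_lt (x : Fin (d - q) → Bool) (t : Bool) {i : Fin (d - (q - 1))}
    (h : (i : ℕ) < d - q) : childL d q x t i = x ⟨i, h⟩ := dif_pos h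

lemma childL_last (x : Fin (d - q) → Bool) (t : Bool) {i : Fin (d - (q - 1))}
    (h : ¬ (i : ℕ) < d - q) : childL d q x t i = t := dif_neg h

lemma childR_pos (y : Fin (d - q) → Bool) (t : Bool) {j : Fin (d - (q - 1))}
    (h : 0 < (j : ℕ)) : childR d q y t j = y ⟨(j : ℕ) - 1, by have := j.isLt; omega⟩ := dif_pos h

lemma childR_zero (y : Fin (d - q) → Bool) (t : Bool) {j : Fin (d - (q - 1))}
    (h : ¬ 0 < (j : ℕ)) : childR d q y t j = t := dif_neg h

/-- the key transfer lemma: connectivity of children is the same as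
connectivity of parents, given no reused dimensions. -/
lemma connRel_child (hq1 : 1 ≤ q) (hqd : q ≤ d) (hq' : q - 1 ≤ d) (π σ : Equiv.Perm (Fin d))
    (hπ : ∀ k : Fin d, q - 1 ≤ (k : ℕ) → σ k ≠ π ⟨d - q, by have := hq1; omega⟩)
    (hσ : ∀ k : Fin d, (k : ℕ) ≤ d - q → π k ≠ σ ⟨q - 1, by have := hq1; omega⟩)
    (x y : Fin (d - q) → Bool) (t s : Bool) :
    connRel d (q - 1) hq' π σ (childL d q x t) (childR d q y s) ↔ connRel d q hqd π σ x y := by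
  rw [connRel_iff, connRel_iff]
  constructor
  · intro h i j hij
    have hi : ((i : ℕ)) < d - (q - 1) := by have := i.isLt; omega
    have hj : ((j : ℕ) + 1) < d - (q - 1) := by have := j.isLt; omega
    have key := h ⟨i, hi⟩ ⟨(j : ℕ) + 1, hj⟩ ?_
    · rw [childL_lt x t (show ((⟨i, hi⟩ : Fin (d - (q-1))) : ℕ) < d - q from i.isLt),
        childR_pos y s (show 0 < ((⟨(j : ℕ) + 1, hj⟩ : Fin (d - (q-1))) : ℕ) from Nat.succ_pos _)] at key
      rw [show x i = x ⟨(i : ℕ), i.isLt⟩ from congrArg x (Fin.ext rfl),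
        show y j = y ⟨(j : ℕ), j.isLt⟩ from congrArg y (Fin.ext rfl)]
      convert key using 2 <;> exact Fin.ext (by simp)
    · refine (fin_perm_congr π (by simp)).trans (hij.trans (fin_perm_congr σ ?_))
      simp only [Fin.coe_castLE, Fin.coe_natAdd]
      omega
  · intro h i' j' hij
    have hi' : (i' : ℕ) < d - q := by
      by_contra hge
      have hval : (i' : ℕ) = d - q := by have := i'.isLt; omega
      have h2 : π (Fin.castLE (Nat.sub_le d (q - 1)) i') = π ⟨d - q, by omega⟩ :=
        fin_perm_congr π (by simpa using hval)
      exact hπ _ (by simp only [Fin.coe_castLE, Fin.coe_natAdd]; omega) (hij.symm.trans h2)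
    have hj' : 0 < (j' : ℕ) := by
      by_contra hle
      have hval : (j' : ℕ) = 0 := by omega
      have h2 : σ (Fin.castLE (by omega : (q-1) + (d - (q-1)) ≤ d) (Fin.natAdd (q-1) j'))
          = σ ⟨q - 1, by omega⟩ :=
        fin_perm_congr σ (by simp [hval])
      exact hσ _ (by simp only [Fin.coe_castLE]; omega) (hij.trans h2)
    have hj2 : (j' : ℕ) - 1 < d - q := by have := j'.isLt; omega
    have key := h ⟨(i' : ℕ), hi'⟩ ⟨(j' : ℕ) - 1, hj2⟩ ?_
    · rw [childL_lt x t hi', childR_pos y s hj']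
      exact key
    · refine (fin_perm_congr π (by simp)).symm.trans (hij.trans (fin_perm_congr σ ?_))
      simp only [Fin.coe_castLE, Fin.coe_natAdd]
      omega

end Child

section Parent

variable {d q : ℕ}

def pL (d q : ℕ) (x' : Fin (d - (q - 1)) → Bool) : Fin (d - q) → Bool :=
  fun i => x' ⟨i, by have := i.isLt; omega⟩

def pR (d q : ℕ) (hq1 : 1 ≤ q) (hqd : q ≤ d) (y' : Fin (d - (q - 1)) → Bool) :
    Fin (d - q) → Bool :=
  fun j => y' ⟨(j : ℕ) + 1, by have := j.isLt; omega⟩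

lemma childL_pL (hq1 : 1 ≤ q) (hqd : q ≤ d) (x' : Fin (d - (q - 1)) → Bool) :
    childL d q (pL d q x') (x' ⟨d - q, by omega⟩) = x' := by
  funext i
  by_cases h : (i : ℕ) < d - q
  · rw [childL_lt _ _ h]
    exact congrArg x' (Fin.ext rfl)
  · rw [childL_last _ _ h]
    exact congrArg x' (Fin.ext (by have := i.isLt; simp; omega))

lemma childR_pR (hq1 : 1 ≤ q) (hqd : q ≤ d) (y' : Fin (d - (q - 1)) → Bool) :
    childR d q (pR d q hq1 hqd y') (y' ⟨0, by omega⟩) = y' := by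
  funext j
  by_cases h : 0 < (j : ℕ)
  · rw [childR_pos _ _ h]
    exact congrArg y' (Fin.ext (by simp [pR]; omega))
  · rw [childR_zero _ _ h]
    exact congrArg y' (Fin.ext (by simp; omega))

lemma pL_childL (x : Fin (d - q) → Bool) (t : Bool) : pL d q (childL d q x t) = x := by
  funext i
  show childL d q x t _ = x i
  rw [childL_lt x t (show _ < d - q from i.isLt)]

lemma pR_childR (hq1 : 1 ≤ q) (hqd : q ≤ d) (y : Fin (d - q) → Bool) (s : Bool) :
    pR d q hq1 hqd (childR d q y s) = y := by
  funext j
  show childR d q y s _ = y j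
  rw [childR_pos y s (show 0 < (j : ℕ) + 1 from Nat.succ_pos _)]
  exact congrArg y (Fin.ext rfl)

def parentV (d q : ℕ) (hq1 : 1 ≤ q) (hqd : q ≤ d) :
    ((Fin (d - (q - 1)) → Bool) ⊕ (Fin (d - (q - 1)) → Bool)) →
      ((Fin (d - q) → Bool) ⊕ (Fin (d - q) → Bool))
  | Sum.inl x' => Sum.inl (pL d q x')
  | Sum.inr y' => Sum.inr (pR d q hq1 hqd y')

lemma exists_child (hq1 : 1 ≤ q) (hqd : q ≤ d)
    (w : (Fin (d - (q - 1)) → Bool) ⊕ (Fin (d - (q - 1)) → Bool)) :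
    ∃ t, childV d q (parentV d q hq1 hqd w) t = w := by
  cases w with
  | inl x' => exact ⟨x' ⟨d - q, by omega⟩, congrArg Sum.inl (childL_pL hq1 hqd x')⟩
  | inr y' => exact ⟨y' ⟨0, by omega⟩, congrArg Sum.inr (childR_pR hq1 hqd y')⟩

lemma parentV_childV (hq1 : 1 ≤ q) (hqd : q ≤ d) (u) (t : Bool) :
    parentV d q hq1 hqd (childV d q u t) = u := by
  cases u with
  | inl x => exact congrArg Sum.inl (pL_childL x t)
  | inr y => exact congrArg Sum.inr (pR_childR hq1 hqd y t)

end Parent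

section Reach

variable {d q : ℕ}

lemma adj_child (hq1 : 1 ≤ q) (hqd : q ≤ d) (hq' : q - 1 ≤ d) (π σ : Equiv.Perm (Fin d))
    (hπ : ∀ k : Fin d, q - 1 ≤ (k : ℕ) → σ k ≠ π ⟨d - q, by have := hq1; omega⟩)
    (hσ : ∀ k : Fin d, (k : ℕ) ≤ d - q → π k ≠ σ ⟨q - 1, by have := hq1; omega⟩)
    {u v} (h : (connGraph d q hqd π σ).Adj u v) (t s : Bool) :
    (connGraph d (q - 1) hq' π σ).Adj (childV d q u t) (childV d q v s) := by
  rcases h with ⟨x, y, rfl, rfl, h⟩ | ⟨x, y, rfl, rfl, h⟩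
  · exact Or.inl ⟨_, _, rfl, rfl, (connRel_child hq1 hqd hq' π σ hπ hσ x y t s).mpr h⟩
  · exact Or.inr ⟨_, _, rfl, rfl, (connRel_child hq1 hqd hq' π σ hπ hσ x y s t).mpr h⟩

lemma adj_parent (hq1 : 1 ≤ q) (hqd : q ≤ d) (hq' : q - 1 ≤ d) (π σ : Equiv.Perm (Fin d))
    (hπ : ∀ k : Fin d, q - 1 ≤ (k : ℕ) → σ k ≠ π ⟨d - q, by have := hq1; omega⟩)
    (hσ : ∀ k : Fin d, (k : ℕ) ≤ d - q → π k ≠ σ ⟨q - 1, by have := hq1; omega⟩)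
    {w w'} (h : (connGraph d (q - 1) hq' π σ).Adj w w') :
    (connGraph d q hqd π σ).Adj (parentV d q hq1 hqd w) (parentV d q hq1 hqd w') := by
  rcases h with ⟨x', y', rfl, rfl, h⟩ | ⟨x', y', rfl, rfl, h⟩
  · refine Or.inl ⟨_, _, rfl, rfl, ?_⟩
    rw [← connRel_child hq1 hqd hq' π σ hπ hσ (pL d q x') (pR d q hq1 hqd y')
      (x' ⟨d - q, by omega⟩) (y' ⟨0, by omega⟩), childL_pL hq1 hqd, childR_pR hq1 hqd]
    exact h
  · refine Or.inr ⟨_, _, rfl, rfl, ?_⟩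
    rw [← connRel_child hq1 hqd hq' π σ hπ hσ (pL d q x') (pR d q hq1 hqd y')
      (x' ⟨d - q, by omega⟩) (y' ⟨0, by omega⟩), childL_pL hq1 hqd, childR_pR hq1 hqd]
    exact h

lemma reachable_sib (hq1 : 1 ≤ q) (hqd : q ≤ d) (hq' : q - 1 ≤ d) (π σ : Equiv.Perm (Fin d))
    (hπ : ∀ k : Fin d, q - 1 ≤ (k : ℕ) → σ k ≠ π ⟨d - q, by have := hq1; omega⟩)
    (hσ : ∀ k : Fin d, (k : ℕ) ≤ d - q → π k ≠ σ ⟨q - 1, by have := hq1; omega⟩)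
    (u) (t s : Bool) :
    (connGraph d (q - 1) hq' π σ).Reachable (childV d q u t) (childV d q u s) := by
  cases u with
  | inl x =>
    obtain ⟨y, hxy⟩ := exists_nbrR hqd π σ x
    have h1 : (connGraph d (q-1) hq' π σ).Adj (childV d q (Sum.inl x) t) (childV d q (Sum.inr y) s) :=
      adj_child hq1 hqd hq' π σ hπ hσ (Or.inl ⟨x, y, rfl, rfl, hxy⟩) t s
    have h2 : (connGraph d (q-1) hq' π σ).Adj (childV d q (Sum.inl x) s) (childV d q (Sum.inr y) s) :=
      adj_child hq1 hqd hq' π σ hπ hσ (Or.inl ⟨x, y, rfl, rfl, hxy⟩) s s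
    exact h1.reachable.trans h2.reachable.symm
  | inr y =>
    obtain ⟨x, hxy⟩ := exists_nbrL hqd π σ y
    have h1 : (connGraph d (q-1) hq' π σ).Adj (childV d q (Sum.inr y) t) (childV d q (Sum.inl x) s) :=
      adj_child hq1 hqd hq' π σ hπ hσ (Or.inr ⟨x, y, rfl, rfl, hxy⟩) t s
    have h2 : (connGraph d (q-1) hq' π σ).Adj (childV d q (Sum.inr y) s) (childV d q (Sum.inl x) s) :=
      adj_child hq1 hqd hq' π σ hπ hσ (Or.inr ⟨x, y, rfl, rfl, hxy⟩) s s
    exact h1.reachable.trans h2.reachable.symm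

lemma reachable_child (hq1 : 1 ≤ q) (hqd : q ≤ d) (hq' : q - 1 ≤ d) (π σ : Equiv.Perm (Fin d))
    (hπ : ∀ k : Fin d, q - 1 ≤ (k : ℕ) → σ k ≠ π ⟨d - q, by have := hq1; omega⟩)
    (hσ : ∀ k : Fin d, (k : ℕ) ≤ d - q → π k ≠ σ ⟨q - 1, by have := hq1; omega⟩)
    {u v} (h : (connGraph d q hqd π σ).Reachable u v) (t s : Bool) :
    (connGraph d (q - 1) hq' π σ).Reachable (childV d q u t) (childV d q v s) := by
  obtain ⟨p⟩ := h
  induction p with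
  | nil => exact reachable_sib hq1 hqd hq' π σ hπ hσ _ t s
  | @cons a b c ha p ih =>
    exact ((adj_child hq1 hqd hq' π σ hπ hσ ha t t).reachable).trans ih

lemma reachable_parent (hq1 : 1 ≤ q) (hqd : q ≤ d) (hq' : q - 1 ≤ d) (π σ : Equiv.Perm (Fin d))
    (hπ : ∀ k : Fin d, q - 1 ≤ (k : ℕ) → σ k ≠ π ⟨d - q, by have := hq1; omega⟩)
    (hσ : ∀ k : Fin d, (k : ℕ) ≤ d - q → π k ≠ σ ⟨q - 1, by have := hq1; omega⟩)
    {w w'} (h : (connGraph d (q - 1) hq' π σ).Reachable w w') :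
    (connGraph d q hqd π σ).Reachable (parentV d q hq1 hqd w) (parentV d q hq1 hqd w') := by
  obtain ⟨p⟩ := h
  induction p with
  | nil => exact SimpleGraph.Reachable.refl _
  | @cons a b c ha p ih =>
    exact ((adj_parent hq1 hqd hq' π σ hπ hσ ha).reachable).trans ih

end Reach

section Count

variable {d q : ℕ}

lemma childL_inj (t : Bool) : Function.Injective (fun x : Fin (d - q) → Bool => childL d q x t) := by
  intro x x' h
  have h2 := congrArg (pL d q) h
  rwa [pL_childL, pL_childL] at h2

lemma childR_inj (t : Bool) (hq1 : 1 ≤ q) (hqd : q ≤ d) :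
    Function.Injective (fun y : Fin (d - q) → Bool => childR d q y t) := by
  intro y y' h
  have h2 := congrArg (pR d q hq1 hqd) h
  rwa [pR_childR, pR_childR] at h2

lemma ncard_childL (hq1 : 1 ≤ q) (hqd : q ≤ d) (S : Set (Fin (d - q) → Bool)) :
    {x' | ∃ x ∈ S, ∃ t : Bool, x' = childL d q x t}.ncard = 2 * S.ncard := by
  have heq : {x' | ∃ x ∈ S, ∃ t : Bool, x' = childL d q x t}
      = (fun x => childL d q x false) '' S ∪ (fun x => childL d q x true) '' S := by
    ext x'
    constructor
    · rintro ⟨x, hx, t, rfl⟩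
      cases t
      · exact Or.inl ⟨x, hx, rfl⟩
      · exact Or.inr ⟨x, hx, rfl⟩
    · rintro (⟨x, hx, rfl⟩ | ⟨x, hx, rfl⟩)
      · exact ⟨x, hx, false, rfl⟩
      · exact ⟨x, hx, true, rfl⟩
  rw [heq, Set.ncard_union_eq ?_ (Set.toFinite _) (Set.toFinite _),
    Set.ncard_image_of_injective _ (childL_inj false),
    Set.ncard_image_of_injective _ (childL_inj true)]
  · omega
  · rw [Set.disjoint_left]
    rintro x' ⟨x, hx, rfl⟩ ⟨x'', hx'', hcollide⟩
    have := congrFun hcollide ⟨d - q, by omega⟩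
    beta_reduce at this
    rw [childL_last _ _ (by simp), childL_last _ _ (by simp)] at this
    exact Bool.noConfusion this

lemma ncard_childR (hq1 : 1 ≤ q) (hqd : q ≤ d) (S : Set (Fin (d - q) → Bool)) :
    {y' | ∃ y ∈ S, ∃ t : Bool, y' = childR d q y t}.ncard = 2 * S.ncard := by
  have heq : {y' | ∃ y ∈ S, ∃ t : Bool, y' = childR d q y t}
      = (fun y => childR d q y false) '' S ∪ (fun y => childR d q y true) '' S := by
    ext y'
    constructor
    · rintro ⟨y, hy, t, rfl⟩
      cases t
      · exact Or.inl ⟨y, hy, rfl⟩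
      · exact Or.inr ⟨y, hy, rfl⟩
    · rintro (⟨y, hy, rfl⟩ | ⟨y, hy, rfl⟩)
      · exact ⟨y, hy, false, rfl⟩
      · exact ⟨y, hy, true, rfl⟩
  rw [heq, Set.ncard_union_eq ?_ (Set.toFinite _) (Set.toFinite _),
    Set.ncard_image_of_injective _ (childR_inj false hq1 hqd),
    Set.ncard_image_of_injective _ (childR_inj true hq1 hqd)]
  · omega
  · rw [Set.disjoint_left]
    rintro y' ⟨y, hy, rfl⟩ ⟨y'', hy'', hcollide⟩
    have := congrFun hcollide ⟨0, by omega⟩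
    beta_reduce at this
    rw [childR_zero _ _ (by simp), childR_zero _ _ (by simp)] at this
    exact Bool.noConfusion this

end Count

/-- no reused dimensions: if `π (m+1) ∉ {σ q, …, σ d}` and
`σ q ∉ {π 1, …, π (m+1)}` (stated `1`-based in the paper; `0`-based here:
`π ⟨d-q⟩ ∉ σ '' {q-1,…,d-1}` and `σ ⟨q-1⟩ ∉ π '' {0,…,d-q}`), then for every
connected component `C` of the `q`-dimensional sub-butterfly connectivity
graph, the children of the vertices of `C` form a single connected component
of the `(q-1)`-dimensional connectivity graph, which is complete bipartite
with twice as many vertices on each side as `C`. -/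
theorem connectivity_graph_component_no_reused_dimension
    (d q : ℕ) (hq1 : 1 ≤ q) (hqd : q ≤ d) (π σ : Equiv.Perm (Fin d))
    (hπ : ∀ k : Fin d, q - 1 ≤ (k : ℕ) → σ k ≠ π ⟨d - q, by omega⟩)
    (hσ : ∀ k : Fin d, (k : ℕ) ≤ d - q → π k ≠ σ ⟨q - 1, by omega⟩) :
    ∀ C : (connGraph d q hqd π σ).ConnectedComponent,
      ∃ C' : (connGraph d (q - 1) (by omega) π σ).ConnectedComponent,
        {w | ∃ u ∈ C.supp, ∃ t : Bool, w = childV d q u t} = C'.supp ∧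
        (∀ x' y' : Fin (d - (q - 1)) → Bool,
          Sum.inl x' ∈ C'.supp → Sum.inr y' ∈ C'.supp →
          (connGraph d (q - 1) (by omega) π σ).Adj (Sum.inl x') (Sum.inr y')) ∧
        {x' : Fin (d - (q - 1)) → Bool | Sum.inl x' ∈ C'.supp}.ncard =
          2 * {x : Fin (d - q) → Bool | Sum.inl x ∈ C.supp}.ncard ∧
        {y' : Fin (d - (q - 1)) → Bool | Sum.inr y' ∈ C'.supp}.ncard =
          2 * {y : Fin (d - q) → Bool | Sum.inr y ∈ C.supp}.ncard := by
  intro C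
  have hq' : q - 1 ≤ d := by omega
  obtain ⟨u0, hu0⟩ := C.exists_rep
  set C' := (connGraph d (q - 1) hq' π σ).connectedComponentMk (childV d q u0 true) with hC'
  have hset : {w | ∃ u ∈ C.supp, ∃ t : Bool, w = childV d q u t} = C'.supp := by
    ext w
    simp only [Set.mem_setOf_eq, SimpleGraph.ConnectedComponent.mem_supp_iff, hC']
    constructor
    · rintro ⟨u, hu, t, rfl⟩
      apply SimpleGraph.ConnectedComponent.sound
      have hu' : (connGraph d q hqd π σ).connectedComponentMk u = C := hu
      have hr : (connGraph d q hqd π σ).Reachable u u0 :=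
        SimpleGraph.ConnectedComponent.exact (hu'.trans hu0.symm)
      exact reachable_child hq1 hqd hq' π σ hπ hσ hr t true
    · intro hw
      have hr' : (connGraph d (q - 1) hq' π σ).Reachable w (childV d q u0 true) :=
        SimpleGraph.ConnectedComponent.exact hw
      obtain ⟨t, ht⟩ := exists_child hq1 hqd w
      refine ⟨parentV d q hq1 hqd w, ?_, t, ht.symm⟩
      have := reachable_parent hq1 hqd hq' π σ hπ hσ hr'
      rw [parentV_childV hq1 hqd u0 true] at this
      have hmk : (connGraph d q hqd π σ).connectedComponentMk u0 = C := hu0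
      rw [← hmk]
      exact SimpleGraph.ConnectedComponent.sound this
  have hL : {x' : Fin (d - (q - 1)) → Bool | Sum.inl x' ∈ C'.supp}
      = {x' | ∃ x ∈ {x : Fin (d - q) → Bool | Sum.inl x ∈ C.supp},
          ∃ t : Bool, x' = childL d q x t} := by
    ext x'
    simp only [Set.mem_setOf_eq, ← hset]
    constructor
    · rintro ⟨u, hu, t, hte⟩
      cases u with
      | inl x => exact ⟨x, hu, t, Sum.inl.inj hte⟩
      | inr y => exact absurd hte (by simp [childV])
    · rintro ⟨x, hx, t, rfl⟩
      exact ⟨Sum.inl x, hx, t, rfl⟩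
  have hR : {y' : Fin (d - (q - 1)) → Bool | Sum.inr y' ∈ C'.supp}
      = {y' | ∃ y ∈ {y : Fin (d - q) → Bool | Sum.inr y ∈ C.supp},
          ∃ t : Bool, y' = childR d q y t} := by
    ext y'
    simp only [Set.mem_setOf_eq, ← hset]
    constructor
    · rintro ⟨u, hu, t, hte⟩
      cases u with
      | inl x => exact absurd hte (by simp [childV])
      | inr y => exact ⟨y, hu, t, Sum.inr.inj hte⟩
    · rintro ⟨y, hy, t, rfl⟩
      exact ⟨Sum.inr y, hy, t, rfl⟩
  refine ⟨C', hset, ?_, ?_, ?_⟩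
  · intro x' y' hx hy
    have hr : (connGraph d (q - 1) hq' π σ).Reachable (Sum.inl x') (Sum.inr y') :=
      (SimpleGraph.ConnectedComponent.exact (hx.trans hy.symm))
    exact (adj_inl_inr hq' π σ x' y').mpr (reachable_connRel hq' π σ hr)
  · rw [hL]
    exact ncard_childL hq1 hqd _
  · rw [hR]
    exact ncard_childR hq1 hqd _
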